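/- Let k ≥ 2 be an integer, let G be a finite simple graph containing no cycle on 2k vertices as a subgraph, let u be a vertex of G, let S ⊆ N(u), and let T be a set of vertices of G disjoint from N(u) ∪ {u}. Then the bipartite subgraph of G consisting of exactly those edges with one endpoint in S and one endpoint in T contains no path on 2k+1 vertices as a subgraph. -/

import Mathlib

open SimpleGraph

/-- `G.ContainsSub H` means `G` contains a copy of `H` as a (not necessarily induced)
subgraph, i.e. there is an injective graph homomorphism from `H` to `G`. -/
def SimpleGraph.ContainsSub {V W : Type*} (G : SimpleGraph V) (H : SimpleGraph W) : Prop :=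
  ∃ f : W → V, Function.Injective f ∧ ∀ a b, H.Adj a b → G.Adj (f a) (f b)

/-- The bipartite subgraph of `G` consisting of exactly those edges with one
endpoint in `S` and the other endpoint in `T`. -/
def SimpleGraph.betweenGraph {V : Type*} (G : SimpleGraph V) (S T : Set V) : SimpleGraph V where
  Adj a b := G.Adj a b ∧ ((a ∈ S ∧ b ∈ T) ∨ (a ∈ T ∧ b ∈ S))
  symm := by
    constructor
    intro a b h
    exact ⟨h.1.symm, h.2.elim (fun hab => Or.inr ⟨hab.2, hab.1⟩) (fun hab => Or.inl ⟨hab.2, hab.1⟩)⟩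
  loopless := by
    constructor
    intro a h
    exact G.loopless.irrefl a h.1

/-- Auxiliary: close a path on `2k-1` vertices whose both ends are adjacent to `u`
into a `2k`-cycle. -/
lemma containsSub_cycle_of_path {V : Type*} (k : ℕ) (hk : 2 ≤ k) (G : SimpleGraph V) (u : V)
    (q : ℕ → V)
    (hinj : ∀ i j, i < 2*k-1 → j < 2*k-1 → q i = q j → i = j)
    (hu : ∀ i, i < 2*k-1 → q i ≠ u)
    (hadj : ∀ i, i + 1 < 2*k-1 → G.Adj (q i) (q (i+1)))
    (h0 : G.Adj u (q 0)) (hlast : G.Adj u (q (2*k-2))) :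
    G.ContainsSub (cycleGraph (2*k)) := by
  obtain ⟨m, hm⟩ : ∃ m, 2*k = m + 2 := ⟨2*k-2, by omega⟩
  rw [hm]
  refine ⟨fun i => if i.val = 0 then u else q (i.val - 1), ?_, ?_⟩
  · intro i j hij
    simp only at hij
    by_cases hi : i.val = 0 <;> by_cases hj : j.val = 0 <;> simp [hi, hj] at hij ⊢
    · exact Fin.ext (by omega)
    · exact absurd hij.symm (hu (j.val - 1) (by have := j.isLt; omega))
    · exact absurd hij (hu (i.val - 1) (by have := i.isLt; omega))
    · have := hinj _ _ (by have := i.isLt; omega) (by have := j.isLt; omega) hij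
      exact Fin.ext (by omega)
  · have key : ∀ a b : Fin (m+2), a = b + 1 → G.Adj (if b.val = 0 then u else q (b.val - 1))
        (if a.val = 0 then u else q (a.val - 1)) := by
      intro a b h
      have hav : a.val = (b.val + 1) % (m+2) := by
        rw [h, Fin.add_def]; simp
      by_cases hb : b.val = m+1
      · have ha0 : a.val = 0 := by rw [hav, hb]; simp [Nat.mod_self]
        have hq : b.val - 1 = 2*k-2 := by omega
        rw [if_pos ha0, if_neg (show ¬ b.val = 0 by omega), hq]
        exact hlast.symm
      · have hav' : a.val = b.val + 1 := by
          rw [hav, Nat.mod_eq_of_lt (by have := b.isLt; omega)]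
        by_cases hb0 : b.val = 0
        · simp [hb0, hav', hb0 ▸ hav']
          exact h0
        · have h1 : a.val ≠ 0 := by omega
          simp only [hb0, h1, if_neg, if_false]
          have : (b.val - 1) + 1 = b.val := by omega
          have hstep := hadj (b.val - 1) (by have := b.isLt; omega)
          rw [this] at hstep
          have : a.val - 1 = b.val := by omega
          rw [this]
          exact hstep
    intro a b h
    rw [cycleGraph_adj] at h
    rcases h with h | h
    · have : a = b + 1 := by rw [← h]; exact (add_sub_cancel b a).symm
      exact (key a b this).symm
    · have : b = a + 1 := by rw [← h]; exact (add_sub_cancel a b).symm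
      exact key b a this

theorem betweenGraph_pathFree_of_evenCycleFree {V : Type*} [Fintype V] [DecidableEq V]
    (k : ℕ) (hk : 2 ≤ k) (G : SimpleGraph V)
    (hfree : ¬ G.ContainsSub (cycleGraph (2 * k))) (u : V) (S T : Set V)
    (hS : S ⊆ G.neighborSet u) (hT : Disjoint T (G.neighborSet u ∪ {u})) :
    ¬ (G.betweenGraph S T).ContainsSub (pathGraph (2 * k + 1)) := by
  rintro ⟨p, hpinj, hpadj⟩
  have hT' := Set.disjoint_left.mp hT
  have hST : ∀ x ∈ S, x ∉ T := fun x hx hxT => hT' hxT (Or.inl (hS hx))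
  have huS : u ∉ S := fun h => G.loopless.irrefl u (hS h)
  have huT : u ∉ T := fun h => hT' h (Or.inr rfl)
  set P : ℕ → V := fun i => p ⟨i % (2*k+1), Nat.mod_lt _ (by omega)⟩ with hP
  have hPinj : ∀ i j, i ≤ 2*k → j ≤ 2*k → P i = P j → i = j := by
    intro i j hi hj h
    have := hpinj h
    rw [Fin.mk.injEq, Nat.mod_eq_of_lt (by omega), Nat.mod_eq_of_lt (by omega)] at this
    exact this
  have hedge : ∀ i, i < 2*k → (G.betweenGraph S T).Adj (P i) (P (i+1)) := by
    intro i hi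
    apply hpadj
    rw [pathGraph_adj]
    left
    simp only [Nat.mod_eq_of_lt (show i < 2*k+1 by omega),
      Nat.mod_eq_of_lt (show i+1 < 2*k+1 by omega)]
  have step : ∀ i, i < 2*k → (P i ∈ S → P (i+1) ∈ T) ∧ (P i ∈ T → P (i+1) ∈ S) := by
    intro i hi
    obtain ⟨hG, hor⟩ := hedge i hi
    constructor
    · intro h
      rcases hor with ⟨_, h2⟩ | ⟨h1, _⟩
      · exact h2
      · exact (hST _ h h1).elim
    · intro h
      rcases hor with ⟨h1, _⟩ | ⟨_, h2⟩
      · exact (hST _ h1 h).elim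
      · exact h2
  have hGadj : ∀ i, i < 2*k → G.Adj (P i) (P (i+1)) := fun i hi => (hedge i hi).1
  have mem0 : P 0 ∈ S ∨ P 0 ∈ T := by
    rcases (hedge 0 (by omega)).2 with ⟨h, _⟩ | ⟨h, _⟩
    exacts [Or.inl h, Or.inr h]
  rcases mem0 with h0 | h0
  · -- P 0 ∈ S : use P 0 .. P (2k-2)
    have alt : ∀ i, i ≤ 2*k → (i % 2 = 0 → P i ∈ S) ∧ (i % 2 = 1 → P i ∈ T) := by
      intro i
      induction i with
      | zero => exact fun _ => ⟨fun _ => h0, fun h => by omega⟩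
      | succ n ih =>
        intro hn
        have ihn := ih (by omega)
        have st := step n (by omega)
        refine ⟨fun h => st.2 (ihn.2 (by omega)), fun h => st.1 (ihn.1 (by omega))⟩
    refine hfree (containsSub_cycle_of_path k hk G u P ?_ ?_ ?_ ?_ ?_)
    · exact fun i j hi hj h => hPinj i j (by omega) (by omega) h
    · intro i hi hiu
      rcases Nat.even_or_odd i with he | he
      · exact huS (hiu ▸ (alt i (by omega)).1 (Nat.even_iff.mp he))
      · exact huT (hiu ▸ (alt i (by omega)).2 (Nat.odd_iff.mp he))
    · exact fun i hi => hGadj i (by omega)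
    · exact hS ((alt 0 (by omega)).1 (by omega))
    · exact hS ((alt (2*k-2) (by omega)).1 (by omega))
  · -- P 0 ∈ T : use P 1 .. P (2k-1)
    have alt : ∀ i, i ≤ 2*k → (i % 2 = 0 → P i ∈ T) ∧ (i % 2 = 1 → P i ∈ S) := by
      intro i
      induction i with
      | zero => exact fun _ => ⟨fun _ => h0, fun h => by omega⟩
      | succ n ih =>
        intro hn
        have ihn := ih (by omega)
        have st := step n (by omega)
        refine ⟨fun h => st.1 (ihn.2 (by omega)), fun h => st.2 (ihn.1 (by omega))⟩
    refine hfree (containsSub_cycle_of_path k hk G u (fun i => P (i+1)) ?_ ?_ ?_ ?_ ?_)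
    · exact fun i j hi hj h => by
        have := hPinj (i+1) (j+1) (by omega) (by omega) h
        omega
    · intro i hi hiu
      rcases Nat.even_or_odd (i+1) with he | he
      · exact huT (hiu ▸ (alt (i+1) (by omega)).1 (Nat.even_iff.mp he))
      · exact huS (hiu ▸ (alt (i+1) (by omega)).2 (Nat.odd_iff.mp he))
    · exact fun i hi => hGadj (i+1) (by omega)
    · exact hS ((alt 1 (by omega)).2 (by omega))
    · show G.Adj u (P (2*k-2+1))
      rw [show 2*k-2+1 = 2*k-1 by omega]
      exact hS ((alt (2*k-1) (by omega)).2 (by omega))
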